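/- For real a, b with a + ν > −1 and b > −1, ν ≥ 0, and ω > 0: ∫₀¹ x^a (1−x)^b J_ν(ωx) dx = [Γ(b+1)Γ(a+ν+1) ω^ν / (2^ν Γ(ν+1) Γ(a+b+ν+2))] · ₂F₃((a+ν+1)/2, (a+ν+2)/2; ν+1, (a+b+ν+2)/2, (a+b+ν+3)/2; −ω²/4). -/

import Mathlib

open Real MeasureTheory intervalIntegral

/-- The Bessel function of the first kind of order `ν`, defined by its power
series `J_ν(x) = Σ_{m≥0} (−1)^m / (m! Γ(m+ν+1)) (x/2)^{2m+ν}`. -/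
noncomputable def besselJ (ν : ℝ) (x : ℝ) : ℝ :=
  ∑' m : ℕ, (-1 : ℝ) ^ m / (m.factorial * Real.Gamma (m + ν + 1)) *
    (x / 2) ^ (2 * m + ν)

/-- Shifted Chebyshev polynomial of the first kind on `[0,1]`:
`T*_k(x) = T_k(2x - 1)`. -/
noncomputable def Tstar (k : ℕ) (x : ℝ) : ℝ :=
  (Polynomial.Chebyshev.T ℝ k).eval (2 * x - 1)

/-- The Pochhammer symbol `(x)_m = x(x+1)⋯(x+m−1)`. -/
noncomputable def poch (x : ℝ) (m : ℕ) : ℝ := ∏ i ∈ Finset.range m, (x + i)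

/-- The generalized hypergeometric function `₂F₃(μ₁,μ₂; ν₁,ν₂,ν₃; z)`. -/
noncomputable def hyp2F3 (μ₁ μ₂ ν₁ ν₂ ν₃ z : ℝ) : ℝ :=
  ∑' m : ℕ, poch μ₁ m * poch μ₂ m /
    (poch ν₁ m * poch ν₂ m * poch ν₃ m * m.factorial) * z ^ m

lemma poch_succ (x : ℝ) (m : ℕ) : poch x (m+1) = poch x m * (x + m) :=
  Finset.prod_range_succ _ _

lemma poch_pos {x : ℝ} (hx : 0 < x) (m : ℕ) : 0 < poch x m :=
  Finset.prod_pos fun i _ => by positivity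

lemma one_le_poch {x : ℝ} (hx : 1 ≤ x) (m : ℕ) : 1 ≤ poch x m := by
  induction m with
  | zero => simp [poch]
  | succ m ih =>
    rw [poch_succ]
    have h1 : (0:ℝ) ≤ (m:ℝ) := Nat.cast_nonneg m
    nlinarith

lemma poch_double (s : ℝ) (m : ℕ) :
    poch (s/2) m * poch ((s+1)/2) m * 4^m = poch s (2*m) := by
  induction m with
  | zero => simp [poch]
  | succ m ih =>
    have h2 : 2*(m+1) = (2*m)+1+1 := by ring
    rw [h2, poch_succ, poch_succ, poch_succ, poch_succ, pow_succ, ← ih]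
    push_cast
    ring

lemma Gamma_poch {x : ℝ} (hx : 0 < x) (m : ℕ) :
    Real.Gamma (x + m) = Real.Gamma x * poch x m := by
  induction m with
  | zero => simp [poch]
  | succ m ih =>
    have hxm : (x + m) ≠ 0 := by positivity
    have : x + (m+1 : ℕ) = (x + m) + 1 := by push_cast; ring
    rw [this, Real.Gamma_add_one hxm, ih, poch_succ]
    ring

lemma betaIntegrable {u v : ℝ} (hu : 0 < u) (hv : 0 < v) :
    IntervalIntegrable (fun x : ℝ => x^(u-1) * (1-x)^(v-1)) volume 0 1 := by
  have h := Complex.betaIntegral_convergent (u := (u:ℂ)) (v := (v:ℂ)) (by simpa) (by simpa)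
  constructor
  · have h1 : IntegrableOn (fun x : ℝ =>
        ((x:ℂ)^((u:ℂ)-1) * (1-(x:ℂ))^((v:ℂ)-1)).re) (Set.Ioc 0 1) volume := h.1.re
    refine h1.congr_fun ?_ measurableSet_Ioc
    intro x hx
    have hx0 : (0:ℝ) ≤ x := le_of_lt hx.1
    have hx1 : (0:ℝ) ≤ 1 - x := by linarith [hx.2]
    have e1 : (Complex.ofReal (x^(u-1))) = (x:ℂ)^((u:ℂ)-1) := by
      rw [Complex.ofReal_cpow hx0]; push_cast; ring_nf
    have e2 : (Complex.ofReal ((1-x)^(v-1))) = (1-(x:ℂ))^((v:ℂ)-1) := by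
      rw [Complex.ofReal_cpow hx1]; push_cast; ring_nf
    show ((x:ℂ)^((u:ℂ)-1) * (1-(x:ℂ))^((v:ℂ)-1)).re = x^(u-1) * (1-x)^(v-1)
    rw [← e1, ← e2, ← Complex.ofReal_mul, Complex.ofReal_re]
  · simp [IntegrableOn, Set.Ioc_eq_empty (by norm_num : ¬ (1:ℝ) < 0)]

lemma betaEval {u v : ℝ} (hu : 0 < u) (hv : 0 < v) :
    ∫ x in (0:ℝ)..1, x^(u-1) * (1-x)^(v-1) = Real.Gamma u * Real.Gamma v / Real.Gamma (u+v) := by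
  have key := Complex.Gamma_mul_Gamma_eq_betaIntegral (s:=(u:ℂ)) (t:=(v:ℂ)) (by simpa) (by simpa)
  have hre : Complex.betaIntegral u v = ((∫ x in (0:ℝ)..1, x^(u-1)*(1-x)^(v-1) : ℝ) : ℂ) := by
    rw [Complex.betaIntegral, ← intervalIntegral.integral_ofReal]
    apply intervalIntegral.integral_congr
    intro x hx
    rw [Set.uIcc_of_le (by norm_num : (0:ℝ) ≤ 1)] at hx
    have e1 : (Complex.ofReal (x^(u-1))) = (x:ℂ)^((u:ℂ)-1) := by
      rw [Complex.ofReal_cpow hx.1]; push_cast; ring_nf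
    have e2 : (Complex.ofReal ((1-x)^(v-1))) = (1-(x:ℂ))^((v:ℂ)-1) := by
      rw [Complex.ofReal_cpow (by linarith [hx.2] : (0:ℝ) ≤ 1 - x)]; push_cast; ring_nf
    show (x:ℂ)^((u:ℂ)-1) * (1-(x:ℂ))^((v:ℂ)-1) = Complex.ofReal (x^(u-1) * (1-x)^(v-1))
    rw [Complex.ofReal_mul, e1, e2]
  rw [show ((u:ℂ)+(v:ℂ)) = (((u+v:ℝ)):ℂ) by push_cast; ring, Complex.Gamma_ofReal,
    Complex.Gamma_ofReal, Complex.Gamma_ofReal, hre] at key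
  have key2 : Real.Gamma u * Real.Gamma v
      = Real.Gamma (u+v) * ∫ x in (0:ℝ)..1, x^(u-1)*(1-x)^(v-1) := by
    exact_mod_cast key
  have hG : Real.Gamma (u+v) ≠ 0 := (Real.Gamma_pos_of_pos (by linarith)).ne'
  field_simp [key2]
  rw [key2]; ring


/-- for `a + ν > −1`, `b > −1`, `ν ≥ 0`, `ω > 0`,
`∫₀¹ x^a (1−x)^b J_ν(ωx) dx = Γ(b+1)Γ(a+ν+1) ω^ν / (2^ν Γ(ν+1) Γ(a+b+ν+2)) ·
 ₂F₃((a+ν+1)/2, (a+ν+2)/2; ν+1, (a+b+ν+2)/2, (a+b+ν+3)/2; −ω²/4)`. -/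
theorem bessel_moment_hypergeometric (a b ν ω : ℝ)
    (ha : -1 < a + ν) (hb : -1 < b) (hν : 0 ≤ ν) (hω : 0 < ω) :
    ∫ x in (0 : ℝ)..1, x ^ a * (1 - x) ^ b * besselJ ν (ω * x) =
      Real.Gamma (b + 1) * Real.Gamma (a + ν + 1) * ω ^ ν /
          (2 ^ ν * Real.Gamma (ν + 1) * Real.Gamma (a + b + ν + 2)) *
        hyp2F3 ((a + ν + 1) / 2) ((a + ν + 2) / 2) (ν + 1)
          ((a + b + ν + 2) / 2) ((a + b + ν + 3) / 2) (-ω ^ 2 / 4) := by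
  have h2 : (0:ℝ) < ω/2 := by linarith
  set c : ℕ → ℝ := fun m => (-1:ℝ)^m / (m.factorial * Real.Gamma (m + ν + 1)) with hc
  set g : ℕ → ℝ → ℝ := fun m x =>
    c m * (ω/2)^(2*(m:ℝ)+ν) * (x^(a+2*(m:ℝ)+ν) * (1-x)^b) with hg
  -- exponent positivity
  have hu : ∀ m : ℕ, (0:ℝ) < a+2*(m:ℝ)+ν+1 := fun m => by
    have : (0:ℝ) ≤ (m:ℝ) := Nat.cast_nonneg m; linarith
  have hv : (0:ℝ) < b+1 := by linarith
  -- each g m is integrable on Ioc 0 1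
  have hInt : ∀ m : ℕ, IntegrableOn (g m) (Set.Ioc 0 1) volume := by
    intro m
    have hbi := (betaIntegrable (hu m) hv).1
    have : IntegrableOn (fun x : ℝ =>
        c m * (ω/2)^(2*(m:ℝ)+ν) * (x^(a+2*(m:ℝ)+ν+1-1) * (1-x)^(b+1-1)))
        (Set.Ioc 0 1) volume := hbi.const_mul _
    simpa using this
  -- the beta-type comparison integral
  have hbi0 := betaIntegrable (u := a+ν+1) (v := b+1) (by linarith) hv
  set B₀ : ℝ := ∫ x in Set.Ioc (0:ℝ) 1, x^(a+ν) * (1-x)^b with hB₀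
  have hGν : (0:ℝ) < Real.Gamma (ν+1) := Real.Gamma_pos_of_pos (by linarith)
  have hGmν : ∀ m : ℕ, Real.Gamma (ν+1) ≤ Real.Gamma ((m:ℝ)+ν+1) := by
    intro m
    have : ((m:ℝ)+ν+1) = (ν+1) + (m:ℕ) := by push_cast; ring
    rw [this, Gamma_poch (by linarith : (0:ℝ) < ν+1)]
    nlinarith [one_le_poch (by linarith : (1:ℝ) ≤ ν+1) m, hGν]
  have hGmνpos : ∀ m : ℕ, (0:ℝ) < Real.Gamma ((m:ℝ)+ν+1) :=
    fun m => lt_of_lt_of_le hGν (hGmν m)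
  -- pointwise norm bound
  have hbound : ∀ m : ℕ, ∀ x ∈ Set.Ioc (0:ℝ) 1,
      ‖g m x‖ ≤ (1/((m.factorial:ℝ) * Real.Gamma (ν+1))) *
        ((ω/2)^ν * ((ω/2)^2)^m) * (x^(a+ν) * (1-x)^b) := by
    intro m x hx
    have hx0 : (0:ℝ) < x := hx.1
    have hx1 : x ≤ 1 := hx.2
    have hw : (1:ℝ) - x ≥ 0 := by linarith
    have hfac : (0:ℝ) < (m.factorial:ℝ) := by positivity
    have habs : ‖g m x‖ = (1/((m.factorial:ℝ) * Real.Gamma ((m:ℝ)+ν+1))) *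
        ((ω/2)^ν * ((ω/2)^2)^m) * (x^(a+2*(m:ℝ)+ν) * (1-x)^b) := by
      have hrw : (ω/2)^(2*(m:ℝ)+ν) = (ω/2)^ν * ((ω/2)^2)^m := by
        rw [Real.rpow_add h2, mul_comm ((ω/2)^(2*(m:ℝ)))]
        congr 1
        rw [show (2*(m:ℝ)) = ((2*m : ℕ):ℝ) by push_cast; ring, Real.rpow_natCast, pow_mul]
      have hE : (0:ℝ) ≤ (1/((m.factorial:ℝ) * Real.Gamma ((m:ℝ)+ν+1))) *
          ((ω/2)^ν * ((ω/2)^2)^m) * (x^(a+2*(m:ℝ)+ν) * (1-x)^b) := by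
        have := (hGmνpos m).le
        positivity
      have hgx : g m x = (-1:ℝ)^m * ((1/((m.factorial:ℝ) * Real.Gamma ((m:ℝ)+ν+1))) *
          ((ω/2)^ν * ((ω/2)^2)^m) * (x^(a+2*(m:ℝ)+ν) * (1-x)^b)) := by
        simp only [hg, hc]
        rw [hrw]
        ring
      rw [hgx, Real.norm_eq_abs, abs_mul, abs_pow, abs_neg, abs_one, one_pow, one_mul,
        abs_of_nonneg hE]
    rw [habs]
    have h1 : (1/((m.factorial:ℝ) * Real.Gamma ((m:ℝ)+ν+1)))
        ≤ 1/((m.factorial:ℝ) * Real.Gamma (ν+1)) := by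
      apply one_div_le_one_div_of_le (by positivity)
      exact mul_le_mul_of_nonneg_left (hGmν m) hfac.le
    have h3 : x^(a+2*(m:ℝ)+ν) ≤ x^(a+ν) := by
      apply Real.rpow_le_rpow_of_exponent_ge hx0 hx1
      have : (0:ℝ) ≤ (m:ℝ) := Nat.cast_nonneg m
      linarith
    have h4 : x^(a+2*(m:ℝ)+ν) * (1-x)^b ≤ x^(a+ν) * (1-x)^b :=
      mul_le_mul_of_nonneg_right h3 (by positivity)
    apply mul_le_mul (mul_le_mul_of_nonneg_right h1 (by positivity)) h4
      (by positivity) (by positivity)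
  -- summability of the integrals of norms
  have hSum : Summable fun m : ℕ => ∫ x in Set.Ioc (0:ℝ) 1, ‖g m x‖ := by
    have hS : Summable (fun m : ℕ =>
        ((ω/2)^ν * B₀ / Real.Gamma (ν+1)) * (((ω/2)^2)^m / m.factorial)) :=
      (Real.summable_pow_div_factorial ((ω/2)^2)).mul_left _
    apply Summable.of_nonneg_of_le (fun m => integral_nonneg fun x => norm_nonneg _) ?_ hS
    intro m
    have hR : IntegrableOn (fun x : ℝ => (1/((m.factorial:ℝ) * Real.Gamma (ν+1))) *
        ((ω/2)^ν * ((ω/2)^2)^m) * (x^(a+ν) * (1-x)^b)) (Set.Ioc 0 1) volume := by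
      have := (hbi0.1).const_mul
        ((1/((m.factorial:ℝ) * Real.Gamma (ν+1))) * ((ω/2)^ν * ((ω/2)^2)^m))
      simpa [IntegrableOn] using this
    calc ∫ x in Set.Ioc (0:ℝ) 1, ‖g m x‖
        ≤ ∫ x in Set.Ioc (0:ℝ) 1, (1/((m.factorial:ℝ) * Real.Gamma (ν+1))) *
            ((ω/2)^ν * ((ω/2)^2)^m) * (x^(a+ν) * (1-x)^b) :=
          setIntegral_mono_on (hInt m).norm hR measurableSet_Ioc (hbound m)
      _ = (1/((m.factorial:ℝ) * Real.Gamma (ν+1))) * ((ω/2)^ν * ((ω/2)^2)^m) * B₀ := by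
          rw [MeasureTheory.integral_const_mul]
      _ = ((ω/2)^ν * B₀ / Real.Gamma (ν+1)) * (((ω/2)^2)^m / m.factorial) := by ring
  -- LHS as a set integral of the tsum
  rw [intervalIntegral.integral_of_le (by norm_num : (0:ℝ) ≤ 1)]
  have hcongr : ∫ x in Set.Ioc (0:ℝ) 1, x ^ a * (1 - x) ^ b * besselJ ν (ω * x)
      = ∫ x in Set.Ioc (0:ℝ) 1, ∑' m, g m x := by
    apply setIntegral_congr_fun measurableSet_Ioc
    intro x hx
    have hx0 : (0:ℝ) < x := hx.1
    dsimp only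
    rw [show besselJ ν (ω*x) = ∑' m : ℕ, (-1:ℝ)^m / (m.factorial * Real.Gamma (m + ν + 1)) * (ω*x/2)^(2*m+ν) from rfl, ← tsum_mul_left]
    apply tsum_congr
    intro m
    have hrw : (ω * x / 2) = (ω/2) * x := by ring
    rw [hrw, Real.mul_rpow h2.le hx0.le]
    simp only [hg, hc]
    rw [show a+2*(m:ℝ)+ν = a + (2*(m:ℝ)+ν) by ring, Real.rpow_add hx0 a (2*(m:ℝ)+ν)]
    ring
  rw [hcongr, ← MeasureTheory.integral_tsum_of_summable_integral_norm hInt hSum]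
  -- evaluate each integral
  have hEval : ∀ m : ℕ, ∫ x in Set.Ioc (0:ℝ) 1, g m x
      = c m * (ω/2)^(2*(m:ℝ)+ν) *
        (Real.Gamma (a+2*(m:ℝ)+ν+1) * Real.Gamma (b+1) / Real.Gamma (a+b+ν+2+2*(m:ℝ))) := by
    intro m
    rw [← intervalIntegral.integral_of_le (by norm_num : (0:ℝ) ≤ 1)]
    have : (fun x : ℝ => g m x) = fun x : ℝ =>
        c m * (ω/2)^(2*(m:ℝ)+ν) * (x^(a+2*(m:ℝ)+ν+1-1) * (1-x)^(b+1-1)) := by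
      funext x; simp [hg]
    rw [this, intervalIntegral.integral_const_mul, betaEval (hu m) hv]
    rw [show a+2*(m:ℝ)+ν+1+(b+1) = a+b+ν+2+2*(m:ℝ) by ring]
  -- termwise identification with the hypergeometric series
  rw [hyp2F3, ← tsum_mul_left]
  apply tsum_congr
  intro m
  rw [hEval m]
  have hp1 : (0:ℝ) < a+ν+1 := by linarith
  have hq1 : (0:ℝ) < a+b+ν+2 := by linarith
  have e1 : Real.Gamma ((m:ℝ)+ν+1) = Real.Gamma (ν+1) * poch (ν+1) m := by
    rw [show (m:ℝ)+ν+1 = (ν+1) + (m:ℕ) by push_cast; ring,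
      Gamma_poch (by linarith : (0:ℝ) < ν+1)]
  have e2 : Real.Gamma (a+2*(m:ℝ)+ν+1)
      = Real.Gamma (a+ν+1) * (poch ((a+ν+1)/2) m * poch ((a+ν+2)/2) m * 4^m) := by
    have hgp := Gamma_poch hp1 (2*m)
    rw [show a+2*(m:ℝ)+ν+1 = (a+ν+1) + ((2*m : ℕ):ℝ) by push_cast; ring, hgp,
      ← poch_double (a+ν+1) m, show (a+ν+1+1)/2 = (a+ν+2)/2 by ring]
  have e3 : Real.Gamma (a+b+ν+2+2*(m:ℝ))
      = Real.Gamma (a+b+ν+2) * (poch ((a+b+ν+2)/2) m * poch ((a+b+ν+3)/2) m * 4^m) := by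
    have hgp := Gamma_poch hq1 (2*m)
    rw [show a+b+ν+2+2*(m:ℝ) = (a+b+ν+2) + ((2*m : ℕ):ℝ) by push_cast; ring, hgp,
      ← poch_double (a+b+ν+2) m, show (a+b+ν+2+1)/2 = (a+b+ν+3)/2 by ring]
  have e4 : (ω/2)^(2*(m:ℝ)+ν) = (ω/2)^ν * ((ω/2)^2)^m := by
    rw [Real.rpow_add h2, mul_comm ((ω/2)^(2*(m:ℝ)))]
    congr 1
    rw [show (2*(m:ℝ)) = ((2*m : ℕ):ℝ) by push_cast; ring, Real.rpow_natCast, pow_mul]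
  have e5 : (ω/2:ℝ)^ν = ω^ν / 2^ν := Real.div_rpow hω.le (by norm_num : (0:ℝ) ≤ 2) ν
  have e6 : (-ω^2/4 : ℝ)^m = (-1:ℝ)^m * ((ω/2)^2)^m := by
    rw [show (-ω^2/4 : ℝ) = (-1) * ((ω/2)^2) by ring, mul_pow]
  have hfac : ((m.factorial : ℝ)) ≠ 0 := by positivity
  have hGa : Real.Gamma (a+ν+1) ≠ 0 := (Real.Gamma_pos_of_pos hp1).ne'
  have hGab : Real.Gamma (a+b+ν+2) ≠ 0 := (Real.Gamma_pos_of_pos hq1).ne'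
  have hPν : poch (ν+1) m ≠ 0 := (poch_pos (by linarith) m).ne'
  have hQ1 : poch ((a+b+ν+2)/2) m ≠ 0 := (poch_pos (by linarith) m).ne'
  have hQ2 : poch ((a+b+ν+3)/2) m ≠ 0 := (poch_pos (by linarith) m).ne'
  have h2ν : (2:ℝ)^ν ≠ 0 := (Real.rpow_pos_of_pos (by norm_num) ν).ne'
  have h4m : ((4:ℝ))^m ≠ 0 := by positivity
  simp only [hc]
  rw [e1, e2, e3, e4, e5, e6]
  field_simp
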